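/- arXiv:1506.02000 — 5 statements merged into one kernel-verified Lean document; each statement's English description precedes it below -/
import Mathlib

section
/- Let X be a real m×n matrix, C₊ = [[-I, X],[0, I]], C₋ = [[I, 0],[-Xᵀ, -I]], and C = C₊C₋. If λ is a real eigenvalue of C with λ ≠ 0, then 2 + λ + λ⁻¹ ≤ 0. -/
open Matrix

private lemma dotSelf_nonneg {k : ℕ} (v : Fin k → ℝ) : 0 ≤ v ⬝ᵥ v :=
  Finset.sum_nonneg fun i _ => mul_self_nonneg (v i)

theorem coxeter_eigenvalue_ineq (m n : ℕ) (X : Matrix (Fin m) (Fin n) ℝ)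
    (C : Matrix (Fin m ⊕ Fin n) (Fin m ⊕ Fin n) ℝ)
    (hC : C = Matrix.fromBlocks (-1 : Matrix (Fin m) (Fin m) ℝ) X 0 1 *
      Matrix.fromBlocks (1 : Matrix (Fin m) (Fin m) ℝ) 0 (-Xᵀ) (-1))
    (lam : ℝ) (hlam : lam ∈ spectrum ℝ C) (hne : lam ≠ 0) :
    2 + lam + lam⁻¹ ≤ 0 := by
  classical
  -- obtain an eigenvector
  have hlam' : lam ∈ spectrum ℝ (Matrix.toLinAlgEquiv' C) := by
    rw [AlgEquiv.spectrum_eq]; exact hlam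
  have hev : Module.End.HasEigenvalue (Matrix.toLinAlgEquiv' C) lam :=
    Module.End.hasEigenvalue_iff_mem_spectrum.mpr hlam'
  obtain ⟨v, hv⟩ := hev.exists_hasEigenvector
  have hvne : v ≠ 0 := hv.2
  have hCv : C *ᵥ v = lam • v := by
    have h := hv.apply_eq_smul
    simpa [Matrix.toLinAlgEquiv'_apply, Matrix.toLin'_apply] using h
  -- block form of C
  have hC' : C = Matrix.fromBlocks (-1 - X * Xᵀ) (-X) (-Xᵀ) (-1) := by
    rw [hC, fromBlocks_multiply]
    congr 1 <;> simp [Matrix.mul_neg, Matrix.neg_mul, sub_eq_add_neg]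
  set x : Fin m → ℝ := v ∘ Sum.inl with hx
  set y : Fin n → ℝ := v ∘ Sum.inr with hy
  rw [hC', fromBlocks_mulVec] at hCv
  have h1 : (-1 - X * Xᵀ) *ᵥ x + (-X) *ᵥ y = lam • x := by
    have := congrArg (fun f => f ∘ Sum.inl) hCv
    simpa [hx, hy, Pi.smul_comp] using this
  have h2 : (-Xᵀ) *ᵥ x + (-1 : Matrix (Fin n) (Fin n) ℝ) *ᵥ y = lam • y := by
    have := congrArg (fun f => f ∘ Sum.inr) hCv
    simpa [hx, hy, Pi.smul_comp] using this
  have e2 : Xᵀ *ᵥ x = (-(1 + lam)) • y := by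
    funext i
    have h := congrFun h2 i
    simp [neg_mulVec, one_mulVec] at h
    simp only [Pi.smul_apply, smul_eq_mul]
    linarith
  -- scalar quantities
  set xx : ℝ := x ⬝ᵥ x with hxx
  set yy : ℝ := y ⬝ᵥ y with hyy
  have hxx0 : 0 ≤ xx := dotSelf_nonneg x
  have hyy0 : 0 ≤ yy := dotSelf_nonneg y
  have hvm : x ᵥ* X = Xᵀ *ᵥ x := by
    rw [← transpose_transpose X, vecMul_transpose, transpose_transpose]
  have hXXT : x ⬝ᵥ ((X * Xᵀ) *ᵥ x) = (1 + lam) ^ 2 * yy := by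
    rw [← mulVec_mulVec, dotProduct_mulVec, hvm, e2, smul_dotProduct, dotProduct_smul]
    simp only [smul_eq_mul]; ring
  have hXy : x ⬝ᵥ (X *ᵥ y) = -(1 + lam) * yy := by
    rw [dotProduct_mulVec, hvm, e2, smul_dotProduct]
    simp only [smul_eq_mul]; try ring
  have key : x ⬝ᵥ ((-1 - X * Xᵀ) *ᵥ x + (-X) *ᵥ y) = lam * xx := by
    rw [h1, dotProduct_smul]; simp only [smul_eq_mul]; try ring
  rw [dotProduct_add, sub_mulVec, neg_mulVec, one_mulVec, dotProduct_sub, dotProduct_neg,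
    neg_mulVec, dotProduct_neg, hXXT, hXy] at key
  -- key : -xx - (1+lam)^2 * yy - (-(1+lam) * yy) = lam * xx
  have main : (1 + lam) * (xx + lam * yy) = 0 := by nlinarith [key]
  rcases eq_or_ne lam (-1) with h | h
  · subst h; norm_num
  · have h1l : (1 : ℝ) + lam ≠ 0 := by intro h0; apply h; linarith
    have hxy : xx = -(lam * yy) := by
      have := mul_eq_zero.mp main
      rcases this with h0 | h0
      · exact absurd h0 h1l
      · linarith
    have hyyne : yy ≠ 0 := by
      intro h0
      have hx0 : x = 0 := by
        have hxxz : x ⬝ᵥ x = 0 := by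
          rw [← hxx]; rw [h0] at hxy; simpa using hxy
        exact dotProduct_self_eq_zero.mp hxxz
      have hy0 : y = 0 := dotProduct_self_eq_zero.mp h0
      apply hvne
      funext i
      cases i with
      | inl i => exact congrFun hx0 i
      | inr i => exact congrFun hy0 i
    have hyyp : 0 < yy := lt_of_le_of_ne hyy0 (Ne.symm hyyne)
    have hxxp : 0 < xx := by
      rcases lt_or_eq_of_le hxx0 with h0 | h0
      · exact h0
      · exfalso
        have hly : lam * yy = 0 := by linarith [hxy]
        rcases mul_eq_zero.mp hly with h' | h'
        · exact hne h'
        · exact hyyne h'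
    have hlamneg : lam < 0 := by nlinarith
    have hform : 2 + lam + lam⁻¹ = (1 + lam) ^ 2 / lam := by
      field_simp; ring
    rw [hform]
    exact div_nonpos_of_nonneg_of_nonpos (sq_nonneg _) (le_of_lt hlamneg)
end

section
/- Let X be a real m×n matrix, C₊ = [[-I, X],[0, I]], C₋ = [[I, 0],[-Xᵀ, -I]], and C = C₊C₋. Then every eigenvalue of C is real and strictly negative. -/
open Matrix

theorem coxeter_eigenvalues_real_negative (m n : ℕ) (X : Matrix (Fin m) (Fin n) ℝ)
    (C : Matrix (Fin m ⊕ Fin n) (Fin m ⊕ Fin n) ℝ)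
    (hC : C = Matrix.fromBlocks (-1 : Matrix (Fin m) (Fin m) ℝ) X 0 1 *
      Matrix.fromBlocks (1 : Matrix (Fin m) (Fin m) ℝ) 0 (-Xᵀ) (-1)) :
    ∀ z ∈ spectrum ℂ (C.map (algebraMap ℝ ℂ)), z.im = 0 ∧ z.re < 0 := by
  intro z hz
  set f : ℝ →+* ℂ := (algebraMap ℝ ℂ) with hf
  set A : Matrix (Fin m ⊕ Fin n) (Fin m ⊕ Fin n) ℝ := Matrix.fromBlocks (-1) X 0 1 with hA
  have hCA : C = -(A * Aᵀ) := by
    rw [hC, hA]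
    simp [Matrix.fromBlocks_transpose, Matrix.fromBlocks_multiply, Matrix.mul_one,
      Matrix.one_mul, Matrix.fromBlocks_neg]
    rw [add_comm]
  set B : Matrix (Fin m ⊕ Fin n) (Fin m ⊕ Fin n) ℂ := A.map f with hB
  have hBH : Bᴴ = Aᵀ.map f := by
    ext i j
    simp [hB, Matrix.conjTranspose_apply, hf, Complex.conj_ofReal]
  have hCB : C.map f = -(B * Bᴴ) := by
    rw [hCA, hBH, hB]
    ext i j
    simp [Matrix.map_apply, Matrix.mul_apply, map_sum]
  -- eigenvector
  rw [← AlgEquiv.spectrum_eq (Matrix.toLinAlgEquiv <| Pi.basisFun ℂ (Fin m ⊕ Fin n)),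
    ← Module.End.hasEigenvalue_iff_mem_spectrum] at hz
  obtain ⟨v, hv⟩ := hz.exists_hasEigenvector
  have hvne : v ≠ 0 := hv.right
  have hMv : (C.map f) *ᵥ v = z • v := by
    have h := hv.apply_eq_smul
    have he : (Matrix.toLinAlgEquiv (Pi.basisFun ℂ (Fin m ⊕ Fin n))) (C.map ⇑f) v
        = (C.map ⇑f) *ᵥ v := by
      have : (Matrix.toLinAlgEquiv (Pi.basisFun ℂ (Fin m ⊕ Fin n))) (C.map ⇑f)
          = Matrix.toLin' (C.map ⇑f) := by
        rw [show ((Matrix.toLinAlgEquiv (Pi.basisFun ℂ (Fin m ⊕ Fin n))) (C.map ⇑f) : (Fin m ⊕ Fin n → ℂ) →ₗ[ℂ] _)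
            = Matrix.toLin (Pi.basisFun ℂ _) (Pi.basisFun ℂ _) (C.map ⇑f) from rfl,
          Matrix.toLin_eq_toLin']
      rw [this, Matrix.toLin'_apply]
    rw [he] at h
    exact h
  set w : (Fin m ⊕ Fin n) → ℂ := Bᴴ *ᵥ v with hw
  have key : z * (star v ⬝ᵥ v) = -(star w ⬝ᵥ w) := by
    have h1 : star v ⬝ᵥ ((C.map f) *ᵥ v) = z * (star v ⬝ᵥ v) := by
      rw [hMv]
      simp [dotProduct_smul, smul_eq_mul]
    rw [← h1, hCB]
    have h2 : -(B * Bᴴ) *ᵥ v = -(B *ᵥ w) := by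
      rw [hw, Matrix.neg_mulVec, Matrix.mulVec_mulVec]
    rw [h2]
    have h3 : star w = star v ᵥ* B := by
      rw [hw, Matrix.star_mulVec, Matrix.conjTranspose_conjTranspose]
    rw [dotProduct_neg, Matrix.dotProduct_mulVec, ← h3]
  -- w ≠ 0
  have hAdet : A.det ≠ 0 := by
    rw [hA, Matrix.det_fromBlocks_zero₂₁, Matrix.det_one, mul_one]
    have : (-1 : Matrix (Fin m) (Fin m) ℝ) = -(1 : Matrix (Fin m) (Fin m) ℝ) := by simp
    rw [this, Matrix.det_neg, Matrix.det_one, mul_one]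
    exact pow_ne_zero _ (by norm_num)
  have hBdet : B.det ≠ 0 := by
    rw [hB, ← RingHom.mapMatrix_apply, ← RingHom.map_det]
    simpa using hAdet
  have hBHdet : Bᴴ.det ≠ 0 := by
    rw [Matrix.det_conjTranspose]
    exact star_ne_zero.mpr hBdet
  have hwne : w ≠ 0 := by
    intro h0
    apply hvne
    have hinj := Matrix.mulVec_injective_iff_isUnit.mpr
      ((Matrix.isUnit_iff_isUnit_det Bᴴ).mpr (isUnit_iff_ne_zero.mpr hBHdet))
    apply hinj
    rw [← hw, h0, Matrix.mulVec_zero]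
  -- sums of normSq
  have hdot : ∀ u : (Fin m ⊕ Fin n) → ℂ,
      star u ⬝ᵥ u = ((∑ i, Complex.normSq (u i) : ℝ) : ℂ) := by
    intro u
    simp only [dotProduct, Pi.star_apply, Complex.ofReal_sum]
    refine Finset.sum_congr rfl fun i _ => ?_
    rw [Complex.star_def, mul_comm, Complex.mul_conj]
  have hpos : ∀ u : (Fin m ⊕ Fin n) → ℂ, u ≠ 0 →
      0 < ∑ i, Complex.normSq (u i) := by
    intro u hu
    obtain ⟨i, hi⟩ := Function.ne_iff.mp hu
    exact Finset.sum_pos' (fun j _ => Complex.normSq_nonneg _)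
      ⟨i, Finset.mem_univ i, Complex.normSq_pos.mpr hi⟩
  set a : ℝ := ∑ i, Complex.normSq (v i) with ha
  set b : ℝ := ∑ i, Complex.normSq (w i) with hb
  have hapos : 0 < a := hpos v hvne
  have hbpos : 0 < b := hpos w hwne
  have key' : z * (a : ℂ) = -(b : ℂ) := by
    rw [ha, hb, ← hdot v, ← hdot w]
    exact key
  have him : z.im = 0 := by
    have := congrArg Complex.im key'
    simp [Complex.mul_im] at this
    rcases this with h | h
    · exact h
    · exact absurd h (ne_of_gt hapos)
  have hre : z.re < 0 := by
    have := congrArg Complex.re key'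
    simp [Complex.mul_re, him] at this
    have hzre : z.re = -b / a := by
      field_simp at this ⊢
      linarith
    rw [hzre]
    exact div_neg_of_neg_of_pos (by linarith) hapos
  exact ⟨him, hre⟩
end

section
/- Let X be a real m×n matrix, C₊ = [[-I, X],[0, I]], C₋ = [[I, 0],[-Xᵀ, -I]], and C = C₊C₋. Then every eigenvalue of -C (equivalently, every root of the characteristic polynomial of -C) is real and strictly positive. -/
open Matrix
open scoped ComplexOrder

lemma aux_posDef_mul_conjTranspose {k : Type*} [Fintype k] [DecidableEq k]
    (N : Matrix k k ℂ) (hN : IsUnit N) : (N * Nᴴ).PosDef := by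
  refine PosDef.of_dotProduct_mulVec_pos (isHermitian_mul_conjTranspose_self N) fun x hx => ?_
  have hinj : Function.Injective (Nᴴ).mulVec :=
    mulVec_injective_iff_isUnit.mpr hN.star
  have hy : Nᴴ *ᵥ x ≠ 0 := by
    intro h
    exact hx (hinj (by simpa using h))
  have key : star x ⬝ᵥ (N * Nᴴ) *ᵥ x = star (Nᴴ *ᵥ x) ⬝ᵥ (Nᴴ *ᵥ x) := by
    rw [← mulVec_mulVec, dotProduct_mulVec, star_mulVec, conjTranspose_conjTranspose]
  rw [key]
  exact dotProduct_star_self_pos_iff.mpr hy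

theorem neg_coxeter_eigenvalues_real_positive (m n : ℕ) (X : Matrix (Fin m) (Fin n) ℝ)
    (C : Matrix (Fin m ⊕ Fin n) (Fin m ⊕ Fin n) ℝ)
    (hC : C = Matrix.fromBlocks (-1 : Matrix (Fin m) (Fin m) ℝ) X 0 1 *
      Matrix.fromBlocks (1 : Matrix (Fin m) (Fin m) ℝ) 0 (-Xᵀ) (-1)) :
    ∀ z ∈ spectrum ℂ ((-C).map (algebraMap ℝ ℂ)), z.im = 0 ∧ 0 < z.re := by
  set M : Matrix (Fin m ⊕ Fin n) (Fin m ⊕ Fin n) ℝ := fromBlocks 1 X 0 1 with hM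
  have key : -C = M * Mᵀ := by
    rw [hC, hM, fromBlocks_transpose, fromBlocks_multiply, fromBlocks_multiply,
      fromBlocks_neg]
    congr 1 <;> simp <;> abel
  set N : Matrix (Fin m ⊕ Fin n) (Fin m ⊕ Fin n) ℂ := M.map (algebraMap ℝ ℂ) with hN
  have hmap : (-C).map (algebraMap ℝ ℂ) = N * Nᴴ := by
    rw [key, hN]
    rw [Matrix.map_mul]
    congr 1
    ext i j
    simp [conjTranspose_apply]
  have hNunit : IsUnit N := by
    rw [Matrix.isUnit_iff_isUnit_det]
    have : N.det = algebraMap ℝ ℂ M.det := (RingHom.map_det (algebraMap ℝ ℂ) M).symm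
    rw [this, hM, det_fromBlocks_zero₂₁]
    simp
  have hPD : ((-C).map (algebraMap ℝ ℂ)).PosDef := by
    rw [hmap]; exact aux_posDef_mul_conjTranspose N hNunit
  have hHerm := hPD.isHermitian
  intro z hz
  rw [hHerm.spectral_theorem, Unitary.conjStarAlgAut_apply, Unitary.spectrum_star_right_conjugate, spectrum_diagonal] at hz
  obtain ⟨i, hi⟩ := hz
  have hpos := hPD.eigenvalues_pos i
  rw [← hi]
  exact ⟨by simp, by simpa using hpos⟩
end

section
/- Let X be a real m×n matrix with at least one nonzero entry, and C = C₊C₋ the associated bipartite Coxeter transformation with C₊ = [[-I, X],[0, I]], C₋ = [[I, 0],[-Xᵀ, -I]]. Then the spectral radius of C is at least (3+√5)/2. -/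
open Matrix

lemma cox_aux_eig (m n : ℕ) (X : Matrix (Fin m) (Fin n) ℝ)
    (hX01 : ∀ i j, X i j = 0 ∨ X i j = 1)
    (hX : ∃ i j, X i j = 1) :
    ∃ (μ : ℝ) (v : Fin m → ℝ), 1 ≤ μ ∧ v ≠ 0 ∧ (X * Xᵀ) *ᵥ v = μ • v := by
  obtain ⟨i, j, hij⟩ := hX
  set A := X * Xᵀ with hA_def
  have hA : A.IsHermitian := isHermitian_mul_conjTranspose_self X
  haveI : Nonempty (Fin m) := ⟨i⟩
  obtain ⟨k₀, -, hk₀'⟩ := Finset.exists_max_image Finset.univ hA.eigenvalues ⟨i, Finset.mem_univ i⟩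
  have hk₀ : ∀ k, hA.eigenvalues k ≤ hA.eigenvalues k₀ := fun k => hk₀' k (Finset.mem_univ k)
  refine ⟨hA.eigenvalues k₀, ⇑(hA.eigenvectorBasis k₀), ?_, ?_, hA.mulVec_eigenvectorBasis k₀⟩
  · set U : Matrix (Fin m) (Fin m) ℝ := (hA.eigenvectorUnitary : Matrix (Fin m) (Fin m) ℝ)
      with hU_def
    have hrow : ∑ k, (U i k)^2 = 1 := by
      have h1 : U * star U = 1 := mem_unitaryGroup_iff.mp hA.eigenvectorUnitary.2
      have := congrFun (congrFun h1 i) i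
      simpa [Matrix.mul_apply, Matrix.one_apply, sq, Matrix.star_apply] using this
    have hAii : A i i = ∑ k, hA.eigenvalues k * (U i k)^2 := by
      conv_lhs => rw [hA.spectral_theorem, Unitary.conjStarAlgAut_apply]
      rw [Matrix.mul_apply]
      refine Finset.sum_congr rfl fun k _ => ?_
      rw [Matrix.mul_diagonal]
      simp [Matrix.star_apply, hU_def, Function.comp]
      ring
    have h1le : 1 ≤ A i i := by
      have h2 : A i i = ∑ j', X i j' ^ 2 := by
        simp [hA_def, Matrix.mul_apply, sq, Matrix.transpose_apply]
      rw [h2]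
      calc (1:ℝ) = X i j ^ 2 := by rw [hij]; norm_num
      _ ≤ ∑ j', X i j' ^ 2 :=
        Finset.single_le_sum (f := fun j' => X i j' ^ 2) (fun j' _ => sq_nonneg _)
          (Finset.mem_univ j)
    have hle : A i i ≤ hA.eigenvalues k₀ := by
      rw [hAii]
      calc ∑ k, hA.eigenvalues k * (U i k)^2 ≤ ∑ k, hA.eigenvalues k₀ * (U i k)^2 :=
        Finset.sum_le_sum (fun k _ => mul_le_mul_of_nonneg_right (hk₀ k) (sq_nonneg _))
      _ = hA.eigenvalues k₀ := by rw [← Finset.mul_sum, hrow, mul_one]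
    linarith
  · intro h
    have h0 : hA.eigenvectorBasis k₀ = 0 := by
      apply (WithLp.equiv 2 _).symm.injective
      simpa using congrArg (WithLp.equiv 2 _).symm h
    have := hA.eigenvectorBasis.orthonormal.1 k₀
    rw [h0] at this
    simp at this

theorem coxeter_spectral_radius_lower_bound (m n : ℕ) (X : Matrix (Fin m) (Fin n) ℝ)
    (hX01 : ∀ i j, X i j = 0 ∨ X i j = 1)
    (hX : ∃ i j, X i j = 1)
    (C : Matrix (Fin m ⊕ Fin n) (Fin m ⊕ Fin n) ℝ)
    (hC : C = Matrix.fromBlocks (-1 : Matrix (Fin m) (Fin m) ℝ) X 0 1 *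
      Matrix.fromBlocks (1 : Matrix (Fin m) (Fin m) ℝ) 0 (-Xᵀ) (-1)) :
    ∃ lam ∈ spectrum ℝ C, (3 + Real.sqrt 5) / 2 ≤ |lam| := by
  obtain ⟨μ, v, hμ, hv, hveq⟩ := cox_aux_eig m n X hX01 hX
  -- C in block form
  have hC' : C = Matrix.fromBlocks (-1 - X * Xᵀ) (-X) (-Xᵀ) (-1) := by
    rw [hC, Matrix.fromBlocks_multiply]
    congr 1 <;> simp [Matrix.mul_neg, sub_eq_add_neg]
  set s : ℝ := Real.sqrt (μ^2 + 4*μ) with hs_def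
  have hs_nonneg : 0 ≤ s := Real.sqrt_nonneg _
  have hs2 : s^2 = μ^2 + 4*μ := Real.sq_sqrt (by nlinarith)
  have hs5 : Real.sqrt 5 ≤ s := Real.sqrt_le_sqrt (by nlinarith)
  have hμs : 0 < μ + s := by linarith
  set lam : ℝ := -((2 + μ) + s)/2 with hlam_def
  set c : ℝ := 2/(μ + s) with hc_def
  -- scalar identities
  have hid1 : -(1+μ) - c*μ = lam := by
    rw [hc_def, hlam_def]
    field_simp
    nlinarith [hs2]
  have hid2 : -1 - c = lam * c := by
    rw [hc_def, hlam_def]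
    field_simp
    nlinarith [hs2]
  -- eigenvector of C
  set w : Fin n → ℝ := c • (Xᵀ *ᵥ v) with hw_def
  set u : (Fin m ⊕ Fin n) → ℝ := Sum.elim v w with hu_def
  have hCu : C *ᵥ u = lam • u := by
    rw [hC', hu_def, Matrix.fromBlocks_mulVec, Sum.elim_comp_inl, Sum.elim_comp_inr]
    have htop : (-1 - X * Xᵀ) *ᵥ v + (-X) *ᵥ w = lam • v := by
      rw [hw_def]
      rw [Matrix.sub_mulVec, Matrix.neg_mulVec, Matrix.mulVec_smul, Matrix.neg_mulVec,
        Matrix.mulVec_mulVec, hveq]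
      rw [← hid1]
      ext k
      simp [Matrix.one_mulVec]
      ring
    have hbot : (-Xᵀ) *ᵥ v + (-1 : Matrix (Fin n) (Fin n) ℝ) *ᵥ w = lam • w := by
      rw [hw_def, Matrix.neg_mulVec, Matrix.neg_mulVec, Matrix.one_mulVec]
      ext k
      simp [Matrix.smul_mulVec]
      linear_combination (Xᵀ *ᵥ v) k * hid2
    rw [htop, hbot]
    ext k
    cases k <;> simp
  have hu0 : u ≠ 0 := by
    intro h
    apply hv
    ext k
    have := congrFun h (Sum.inl k)
    simpa [hu_def] using this
  refine ⟨lam, ?_, ?_⟩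
  · rw [spectrum.mem_iff]
    rw [Matrix.isUnit_iff_isUnit_det, isUnit_iff_ne_zero, not_not]
    rw [← Matrix.exists_mulVec_eq_zero_iff]
    refine ⟨u, hu0, ?_⟩
    have halg : (algebraMap ℝ (Matrix (Fin m ⊕ Fin n) (Fin m ⊕ Fin n) ℝ) lam) = lam • 1 := by
      rw [Algebra.algebraMap_eq_smul_one]
    rw [halg, Matrix.sub_mulVec, Matrix.smul_mulVec, Matrix.one_mulVec, hCu, sub_self]
  · have hlamneg : lam < 0 := by rw [hlam_def]; linarith
    rw [abs_of_neg hlamneg, hlam_def]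
    rw [neg_div, neg_neg]
    linarith
end

section
/- Let X be a real m×n matrix and A = [[0, X],[Xᵀ, 0]]. If α is an eigenvalue of A, then -α² ≤ 0, and for every eigenvalue λ of C = C₊C₋ (with C₊ = [[-I,X],[0,I]], C₋ = [[I,0],[-Xᵀ,-I]]) there exists an eigenvalue α of A with λ² + (2 + α²)λ + 1 = 0. -/
open Matrix

lemma mem_spec_iff_aux {k : Type*} [Fintype k] [DecidableEq k] (M : Matrix k k ℝ) (μ : ℝ) :
    μ ∈ spectrum ℝ M ↔ ∃ v, v ≠ 0 ∧ M *ᵥ v = μ • v := by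
  rw [spectrum.mem_iff, Matrix.isUnit_iff_isUnit_det, isUnit_iff_ne_zero, not_not,
    ← Matrix.exists_mulVec_eq_zero_iff]
  have h : ∀ v, ((algebraMap ℝ (Matrix k k ℝ)) μ - M) *ᵥ v = μ • v - M *ᵥ v := by
    intro v
    simp [Matrix.sub_mulVec, Algebra.algebraMap_eq_smul_one, Matrix.smul_mulVec]
  constructor
  · rintro ⟨v, hv, hveq⟩
    exact ⟨v, hv, by rw [h v, sub_eq_zero] at hveq; exact hveq.symm⟩
  · rintro ⟨v, hv, hveq⟩
    exact ⟨v, hv, by rw [h v, sub_eq_zero, hveq]⟩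

theorem coxeter_adjacency_eigenvalue_correspondence (m n : ℕ)
    (X : Matrix (Fin m) (Fin n) ℝ)
    (A C : Matrix (Fin m ⊕ Fin n) (Fin m ⊕ Fin n) ℝ)
    (hA : A = Matrix.fromBlocks (0 : Matrix (Fin m) (Fin m) ℝ) X Xᵀ 0)
    (hC : C = Matrix.fromBlocks (-1 : Matrix (Fin m) (Fin m) ℝ) X 0 1 *
      Matrix.fromBlocks (1 : Matrix (Fin m) (Fin m) ℝ) 0 (-Xᵀ) (-1)) :
    (∀ α ∈ spectrum ℝ A, -α ^ 2 ≤ 0) ∧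
      ∀ lam ∈ spectrum ℝ C, ∃ α ∈ spectrum ℝ A,
        lam ^ 2 + (2 + α ^ 2) * lam + 1 = 0 := by
  constructor
  · intro α _
    nlinarith [sq_nonneg α]
  intro lam hlam
  obtain ⟨v, hv, hCv⟩ := (mem_spec_iff_aux C lam).mp hlam
  have hAt : Aᵀ = A := by
    subst hA
    simp [Matrix.fromBlocks_transpose]
  -- key matrix identity
  have hid : (C + 1) * (C + 1) = -(A * A * C) := by
    subst hA hC
    rw [show (1 : Matrix (Fin m ⊕ Fin n) (Fin m ⊕ Fin n) ℝ) =
      Matrix.fromBlocks 1 0 0 1 from (Matrix.fromBlocks_one).symm]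
    simp only [Matrix.fromBlocks_multiply, Matrix.fromBlocks_add, Matrix.fromBlocks_neg]
    rw [Matrix.fromBlocks_inj]
    refine ⟨?_, ?_, ?_, ?_⟩ <;>
      · simp only [neg_smul, one_smul, smul_eq_mul, Matrix.mul_one, Matrix.one_mul,
          Matrix.mul_zero, Matrix.zero_mul, Matrix.mul_neg, Matrix.neg_mul, neg_neg,
          add_zero, zero_add, neg_one_smul, Matrix.add_mul, Matrix.mul_add,
          Matrix.mul_assoc, neg_add_rev, neg_neg, neg_zero]
        abel
  have hC1v : (C + 1) *ᵥ v = (lam + 1) • v := by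
    rw [Matrix.add_mulVec, hCv, Matrix.one_mulVec, add_smul, one_smul]
  have h2 : ((lam + 1) ^ 2) • v = (-lam) • (A *ᵥ (A *ᵥ v)) := by
    have h := congrArg (fun M => M *ᵥ v) hid
    simp only [← Matrix.mulVec_mulVec, Matrix.neg_mulVec] at h
    rw [hCv, hC1v, Matrix.mulVec_smul, hC1v, Matrix.mulVec_smul, Matrix.mulVec_smul] at h
    rw [smul_smul, ← sq] at h
    rw [h, neg_smul]
  have hlam0 : lam ≠ 0 := by
    intro h0
    apply hv
    rw [h0] at h2
    simpa using h2
  set μ : ℝ := -(lam + 1) ^ 2 / lam with hμdef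
  have hμ : A *ᵥ (A *ᵥ v) = μ • v := by
    have hl : (-lam) ≠ 0 := neg_ne_zero.mpr hlam0
    calc A *ᵥ (A *ᵥ v) = (-lam)⁻¹ • ((-lam) • (A *ᵥ (A *ᵥ v))) := by
          rw [smul_smul, inv_mul_cancel₀ hl, one_smul]
      _ = (-lam)⁻¹ • (((lam + 1) ^ 2) • v) := by rw [← h2]
      _ = μ • v := by
          rw [smul_smul]
          congr 1
          field_simp [hμdef]
          rw [hμdef]
          field_simp
  -- positivity of μ
  have hdotv : 0 < v ⬝ᵥ v := by
    have h1 : v ⬝ᵥ v ≠ 0 := fun h => hv ((dotProduct_self_eq_zero).mp h)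
    have h2 : 0 ≤ v ⬝ᵥ v := Finset.sum_nonneg fun i _ => mul_self_nonneg _
    exact lt_of_le_of_ne h2 (Ne.symm h1)
  have key : μ * (v ⬝ᵥ v) = (A *ᵥ v) ⬝ᵥ (A *ᵥ v) := by
    have h1 : v ⬝ᵥ (A *ᵥ (A *ᵥ v)) = (A *ᵥ v) ⬝ᵥ (A *ᵥ v) := by
      rw [Matrix.dotProduct_mulVec, ← Matrix.mulVec_transpose, hAt]
    rw [← h1, hμ, dotProduct_smul, smul_eq_mul]
  have hAv : 0 ≤ (A *ᵥ v) ⬝ᵥ (A *ᵥ v) := Finset.sum_nonneg fun i _ => mul_self_nonneg _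
  have hμ0 : 0 ≤ μ := by nlinarith [key, hdotv, hAv]
  set s : ℝ := Real.sqrt μ with hsdef
  have hs2 : s ^ 2 = μ := Real.sq_sqrt hμ0
  have hfinal : ∀ α : ℝ, α ^ 2 = μ → lam ^ 2 + (2 + α ^ 2) * lam + 1 = 0 := by
    intro α hα
    rw [hα, hμdef]
    field_simp
    ring
  by_cases hw : A *ᵥ v + s • v = 0
  · refine ⟨-s, ?_, hfinal _ (by rw [neg_pow, ← hs2]; ring)⟩
    rw [mem_spec_iff_aux]
    refine ⟨v, hv, ?_⟩
    have : A *ᵥ v = -(s • v) := by linear_combination (norm := module) hw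
    rw [this, neg_smul]
  · refine ⟨s, ?_, hfinal _ hs2⟩
    rw [mem_spec_iff_aux]
    refine ⟨A *ᵥ v + s • v, hw, ?_⟩
    rw [Matrix.mulVec_add, Matrix.mulVec_smul, hμ, ← hs2, smul_add, smul_smul, ← sq,
      add_comm]
end
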